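/- Let z = φ̂(ξ) - φ̂(ξ₂) with φ̂' < 0, and t(ξ) = √(1 - ω̂(ξ)²) with ω̂ ∈ (0,1), ω̂' > 0, and suppose φ̂'(ξ) = -(ĉ(ξ)/ω̂(ξ))√(1+ψ'(ξ)²). Writing z as a function of t along the curve via ξ = ξ̂, the derivative satisfies dz/dt = (ĉ√(1+ψ'²)/(ω̂² ω̂'))·t evaluated at ξ̂(z). In particular, if ĉ ≥ c₀ > 0, |ψ'| ≥ ψ₀' ≥ 0 and ω̂, ω̂' ≤ ψ₁, then dz/dt ≥ (c₀√(1+ψ₀'²)/ψ₁³)·t > 0 for t > 0. -/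

import Mathlib

/-- Slope of the boundary curve in the hodograph plane: with
`z'(ξ) = φ̂'(ξ) = -(ĉ/ω̂)√(1+ψ'²)` and `t'(ξ) = -ω̂ω̂'/√(1-ω̂²)`, the ratio
`dz/dt` equals `(ĉ√(1+ψ'²)/(ω̂²ω̂'))·t` with `t = √(1-ω̂²)`, and under the
stated bounds it is at least `(c₀√(1+ψ₀'²)/ψ₁³)·t > 0` when `t > 0`. -/
theorem hodograph_curve_slope
    (ξ₁ ξ₂ c₀ ψ₀' ψ₁ : ℝ) (φhat' ωhat ωhat' chat ψ' : ℝ → ℝ)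
    (hc₀ : 0 < c₀) (hψ₀' : 0 ≤ ψ₀') (hψ₁ : 0 < ψ₁)
    (hφ' : ∀ ξ ∈ Set.Icc ξ₁ ξ₂,
      φhat' ξ = -(chat ξ / ωhat ξ) * Real.sqrt (1 + (ψ' ξ) ^ 2))
    (hω : ∀ ξ ∈ Set.Icc ξ₁ ξ₂, 0 < ωhat ξ ∧ ωhat ξ < 1)
    (hω' : ∀ ξ ∈ Set.Icc ξ₁ ξ₂, 0 < ωhat' ξ)
    (hcb : ∀ ξ ∈ Set.Icc ξ₁ ξ₂, c₀ ≤ chat ξ)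
    (hψb : ∀ ξ ∈ Set.Icc ξ₁ ξ₂, ψ₀' ≤ |ψ' ξ|)
    (hωb : ∀ ξ ∈ Set.Icc ξ₁ ξ₂, ωhat ξ ≤ ψ₁ ∧ ωhat' ξ ≤ ψ₁) :
    ∀ ξ ∈ Set.Icc ξ₁ ξ₂,
      (φhat' ξ / (-(ωhat ξ * ωhat' ξ) / Real.sqrt (1 - (ωhat ξ) ^ 2)) =
        (chat ξ * Real.sqrt (1 + (ψ' ξ) ^ 2) / ((ωhat ξ) ^ 2 * ωhat' ξ)) *
          Real.sqrt (1 - (ωhat ξ) ^ 2)) ∧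
      ((c₀ * Real.sqrt (1 + ψ₀' ^ 2) / ψ₁ ^ 3) * Real.sqrt (1 - (ωhat ξ) ^ 2) ≤
        φhat' ξ / (-(ωhat ξ * ωhat' ξ) / Real.sqrt (1 - (ωhat ξ) ^ 2))) ∧
      (0 < Real.sqrt (1 - (ωhat ξ) ^ 2) →
        0 < φhat' ξ / (-(ωhat ξ * ωhat' ξ) / Real.sqrt (1 - (ωhat ξ) ^ 2))) := by
  intro ξ hξ
  obtain ⟨hω0, hω1⟩ := hω ξ hξ
  have hω'0 := hω' ξ hξ
  obtain ⟨hωb1, hωb2⟩ := hωb ξ hξ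
  have hs : 0 < Real.sqrt (1 - (ωhat ξ) ^ 2) := by
    apply Real.sqrt_pos.2
    nlinarith
  have hQ : Real.sqrt (1 + ψ₀' ^ 2) ≤ Real.sqrt (1 + (ψ' ξ) ^ 2) := by
    apply Real.sqrt_le_sqrt
    have h := hψb ξ hξ
    nlinarith [abs_nonneg (ψ' ξ), sq_abs (ψ' ξ)]
  have hQ0 : 0 < Real.sqrt (1 + ψ₀' ^ 2) := Real.sqrt_pos.2 (by positivity)
  have heq : φhat' ξ / (-(ωhat ξ * ωhat' ξ) / Real.sqrt (1 - (ωhat ξ) ^ 2)) =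
      (chat ξ * Real.sqrt (1 + (ψ' ξ) ^ 2) / ((ωhat ξ) ^ 2 * ωhat' ξ)) *
        Real.sqrt (1 - (ωhat ξ) ^ 2) := by
    rw [hφ' ξ hξ]
    have hcpos : 0 < chat ξ ∨ 0 = chat ξ ∨ chat ξ < 0 := lt_trichotomy 0 (chat ξ)
    field_simp
  refine ⟨heq, ?_, ?_⟩
  · rw [heq]
    have hc := hcb ξ hξ
    have hmain : c₀ * Real.sqrt (1 + ψ₀' ^ 2) / ψ₁ ^ 3 ≤
        chat ξ * Real.sqrt (1 + (ψ' ξ) ^ 2) / ((ωhat ξ) ^ 2 * ωhat' ξ) := by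
      have h1 : c₀ * Real.sqrt (1 + ψ₀' ^ 2) ≤ chat ξ * Real.sqrt (1 + (ψ' ξ) ^ 2) :=
        mul_le_mul hc hQ hQ0.le (le_trans hc₀.le hc)
      have h2 : (ωhat ξ) ^ 2 * ωhat' ξ ≤ ψ₁ ^ 3 := by nlinarith [mul_le_mul (mul_le_mul hωb1 hωb1 hω0.le hψ₁.le) hωb2 hω'0.le (by positivity : (0:ℝ) ≤ ψ₁ * ψ₁)]
      exact div_le_div₀ (le_trans (by positivity) h1) h1 (by positivity) h2
    exact mul_le_mul_of_nonneg_right hmain hs.le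
  · intro _
    rw [heq]
    have hc : 0 < chat ξ := lt_of_lt_of_le hc₀ (hcb ξ hξ)
    have hq : 0 < Real.sqrt (1 + (ψ' ξ) ^ 2) := Real.sqrt_pos.2 (by positivity)
    positivity
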